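/- arXiv:2305.06132 — 2 statements merged into one kernel-verified Lean document; each statement's English description precedes it below -/
import Mathlib

section
/- Maclaurin's inequality: if λ = (λ₁,…,λₙ) ∈ ℝⁿ lies in the m-convex cone Γᵐ (i.e. S₁(λ) > 0, …, Sₘ(λ) > 0), then for all 1 ≤ j ≤ i ≤ m one has (Sⱼ(λ)/C(n,j))^(1/j) ≥ (Sᵢ(λ)/C(n,i))^(1/i). -/
/-- The `k`-th elementary symmetric polynomial of `lam : Fin n → ℝ`. -/
noncomputable def symmS (n k : ℕ) (lam : Fin n → ℝ) : ℝ :=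
  ∑ A ∈ Finset.powersetCard k (Finset.univ : Finset (Fin n)), ∏ i ∈ A, lam i

/-- The `m`-convex cone `Γᵐ ⊂ ℝⁿ`. -/
def GammaCone (n m : ℕ) : Set (Fin n → ℝ) :=
  {lam | ∀ k, 1 ≤ k → k ≤ m → 0 < symmS n k lam}

open Polynomial

namespace MaclaurinAux

open Multiset

/-- esymm basics -/
lemma esymm_zero' (s : Multiset ℝ) : s.esymm 0 = 1 := by
  simp [Multiset.esymm]

lemma esymm_cons (a : ℝ) (s : Multiset ℝ) (k : ℕ) :
    (a ::ₘ s).esymm (k + 1) = s.esymm (k + 1) + a * s.esymm k := by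
  simp only [Multiset.esymm, Multiset.powersetCard_cons, Multiset.map_add, Multiset.sum_add,
    Multiset.map_map]
  congr 1
  rw [← Multiset.sum_map_mul_left]
  congr 1
  exact Multiset.map_congr rfl fun t ht => by simp

lemma esymm_of_card_lt {s : Multiset ℝ} {k : ℕ} (h : Multiset.card s < k) : s.esymm k = 0 := by
  simp [Multiset.esymm, Multiset.powersetCard_eq_empty _ h]

lemma esymm_one' (s : Multiset ℝ) : s.esymm 1 = s.sum := by
  simp [Multiset.esymm, Multiset.powersetCard_one, Multiset.map_map]

lemma esymm_card (s : Multiset ℝ) : s.esymm (Multiset.card s) = s.prod := by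
  induction s using Multiset.induction_on with
  | empty => simp [esymm_zero']
  | cons a s ih =>
      rw [Multiset.card_cons, esymm_cons, esymm_of_card_lt (by simp), ih, Multiset.prod_cons,
        zero_add]

/-- Cauchy-Schwarz for multisets -/
lemma cs (s : Multiset ℝ) : s.sum ^ 2 ≤ (Multiset.card s : ℝ) * (s.map (fun x => x ^ 2)).sum := by
  induction s using Multiset.induction_on with
  | empty => simp
  | cons a s ih =>
      simp only [Multiset.sum_cons, Multiset.card_cons, Multiset.map_cons]
      push_cast
      have hQ : (0:ℝ) ≤ (s.map (fun x => x ^ 2)).sum := by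
        apply Multiset.sum_nonneg; intro x hx
        obtain ⟨y, _, rfl⟩ := Multiset.mem_map.mp hx
        positivity
      rcases eq_or_ne s 0 with rfl | hs
      · simp
      · have hn1 : (1:ℝ) ≤ (Multiset.card s : ℝ) := by
          exact_mod_cast Multiset.card_pos.mpr hs
        have h1 := mul_le_mul_of_nonneg_left ih (Nat.cast_nonneg (Multiset.card s) :
          (0:ℝ) ≤ (Multiset.card s : ℝ))
        nlinarith [h1, sq_nonneg ((Multiset.card s : ℝ) * a - s.sum), ih, hQ, hn1]

lemma e2_identity (s : Multiset ℝ) :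
    s.sum ^ 2 = (s.map (fun x => x ^ 2)).sum + 2 * s.esymm 2 := by
  induction s using Multiset.induction_on with
  | empty => simp [esymm_of_card_lt]; exact esymm_of_card_lt (by simp)
  | cons a s ih =>
      simp only [Multiset.sum_cons, Multiset.map_cons]
      rw [esymm_cons, esymm_one']
      ring_nf
      ring_nf at ih
      linarith

/-- Newton's inequality at k = 1 (unnormalized form). -/
lemma newton_one (s : Multiset ℝ) (h2 : 2 ≤ Multiset.card s) :
    ((Multiset.card s).choose 1 : ℝ) ^ 2 * (s.esymm 0 * s.esymm 2) ≤
      ((Multiset.card s).choose 0 : ℝ) * ((Multiset.card s).choose 2 : ℝ) * s.esymm 1 ^ 2 := by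
  set n := Multiset.card s with hn
  have hC2 : 2 * ((n.choose 2 : ℕ) : ℝ) = (n : ℝ) * ((n : ℝ) - 1) := by
    have h := Nat.choose_succ_right_eq n 1
    have h1 : n.choose 1 = n := Nat.choose_one_right n
    have : n.choose 2 * 2 = n * (n - 1) := by rw [h, h1]
    have hcast : ((n.choose 2 * 2 : ℕ) : ℝ) = ((n * (n - 1) : ℕ) : ℝ) := by rw [this]
    push_cast [Nat.cast_sub (by omega : 1 ≤ n)] at hcast
    linarith
  have hcs := cs s
  have hid := e2_identity s
  rw [esymm_zero', esymm_one', Nat.choose_one_right, Nat.choose_zero_right]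
  push_cast
  -- goal : (n:ℝ)^2 * (1 * esymm 2) ≤ 1 * choose n 2 * sum^2
  have hn2 : (2:ℝ) ≤ (n:ℝ) := by exact_mod_cast h2
  nlinarith [hcs, hid, hC2]

/-- The choose identity `(n-k) * C(n,k) = n * C(n-1,k)`. -/
lemma choose_sub_mul (n k : ℕ) (hn : 1 ≤ n) :
    (n - k) * n.choose k = n * (n - 1).choose k := by
  obtain ⟨m, rfl⟩ : ∃ m, n = m + 1 := ⟨n - 1, by omega⟩
  calc (m + 1 - k) * (m + 1).choose k = (m + 1).choose k * (m + 1 - k) := Nat.mul_comm _ _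
    _ = (m + 1).choose (k + 1) * (k + 1) := (Nat.choose_succ_right_eq (m + 1) k).symm
    _ = Nat.succ m * Nat.choose m k := (Nat.add_one_mul_choose_eq m k).symm
    _ = (m + 1) * (m + 1 - 1).choose k := by simp

/-- Derivative step: esymm values of roots of the derivative. -/
lemma exists_deriv_multiset (s : Multiset ℝ) (hn : 1 ≤ Multiset.card s) :
    ∃ t : Multiset ℝ, Multiset.card t = Multiset.card s - 1 ∧
      ∀ k ≤ Multiset.card s - 1,
        (Multiset.card s : ℝ) * t.esymm k = ((Multiset.card s - k : ℕ) : ℝ) * s.esymm k := by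
  classical
  set n := Multiset.card s with hns
  set P : ℝ[X] := (s.map fun a => X - C a).prod with hP
  have hPm : P.Monic := monic_multiset_prod_of_monic _ _ fun a _ => monic_X_sub_C a
  have hPdeg : P.natDegree = n := natDegree_multiset_prod_X_sub_C_eq_card s
  have hProots : P.roots = s := roots_multiset_prod_X_sub_C s
  set Q := derivative P with hQ
  have hcard1 : n ≤ Multiset.card Q.roots + 1 := by
    have := Polynomial.card_roots_le_derivative P
    rwa [hProots, ← hns] at this
  have hQdeg_le : Q.natDegree ≤ n - 1 := by
    have := natDegree_derivative_le P
    rwa [hPdeg] at this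
  have hcard2 : Multiset.card Q.roots ≤ Q.natDegree := Polynomial.card_roots' Q
  have hQcard : Multiset.card Q.roots = n - 1 := by omega
  have hQdeg : Q.natDegree = n - 1 := by omega
  have hQroots : Multiset.card Q.roots = Q.natDegree := by omega
  have hPn : P.coeff n = 1 := by
    have := hPm.coeff_natDegree
    rwa [hPdeg] at this
  have hQlead : Q.leadingCoeff = (n : ℝ) := by
    rw [Polynomial.leadingCoeff, hQdeg, hQ, Polynomial.coeff_derivative]
    rw [show n - 1 + 1 = n from by omega, hPn]
    have : ((n - 1 : ℕ) : ℝ) + 1 = (n : ℝ) := by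
      exact_mod_cast congrArg (Nat.cast (R := ℝ)) (show n - 1 + 1 = n by omega)
    push_cast at this ⊢
    linarith
  refine ⟨Q.roots, hQcard, ?_⟩
  intro k hk
  have hkn : k ≤ n := le_trans hk (Nat.sub_le _ _)
  have e1 : Q.coeff (n - 1 - k) = (n : ℝ) * (-1) ^ k * Q.roots.esymm k := by
    have h := Polynomial.coeff_eq_esymm_roots_of_card hQroots
      (show n - 1 - k ≤ Q.natDegree by omega)
    rw [hQdeg] at h
    rw [show n - 1 - (n - 1 - k) = k from by omega] at h
    rw [h, hQlead]
  have e2 : Q.coeff (n - 1 - k) = P.coeff (n - k) * ((n - k : ℕ) : ℝ) := by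
    rw [hQ, Polynomial.coeff_derivative, show n - 1 - k + 1 = n - k from by omega]
    congr 1
    exact_mod_cast congrArg (Nat.cast (R := ℝ)) (show n - 1 - k + 1 = n - k by omega)
  have e3 : P.coeff (n - k) = (-1) ^ k * s.esymm k := by
    have h := Multiset.prod_X_sub_C_coeff s (show n - k ≤ Multiset.card s by omega)
    rw [← hns, show n - (n - k) = k from by omega] at h
    exact h
  have hne : ((-1 : ℝ)) ^ k ≠ 0 := by
    apply pow_ne_zero; norm_num
  have hcomb : (-1 : ℝ) ^ k * ((n : ℝ) * Q.roots.esymm k)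
      = (-1 : ℝ) ^ k * (((n - k : ℕ) : ℝ) * s.esymm k) := by
    have h4 : (n : ℝ) * (-1) ^ k * Q.roots.esymm k
        = (-1) ^ k * s.esymm k * ((n - k : ℕ) : ℝ) := by rw [← e1, e2, e3]
    linear_combination h4
  exact mul_left_cancel₀ hne hcomb

/-- Reversal: esymm of inverses. -/
lemma esymm_inv : ∀ (s : Multiset ℝ), (0:ℝ) ∉ s → ∀ k, k ≤ Multiset.card s →
    (s.map (fun x => x⁻¹)).esymm k * s.prod = s.esymm (Multiset.card s - k) := by
  intro s
  induction s using Multiset.induction_on with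
  | empty =>
      intro _ k hk
      have hk0 : k = 0 := by simpa using hk
      subst hk0
      simp [esymm_zero']
  | cons a s ih =>
      intro h0 k hk
      have ha : a ≠ 0 := fun h => h0 (h ▸ Multiset.mem_cons_self a s)
      have h0s : (0:ℝ) ∉ s := fun h => h0 (Multiset.mem_cons_of_mem h)
      rw [Multiset.map_cons, Multiset.prod_cons]
      cases k with
      | zero =>
          rw [esymm_zero', one_mul, Nat.sub_zero, esymm_card, Multiset.prod_cons]
      | succ k =>
          rw [Multiset.card_cons] at hk ⊢
          rw [esymm_cons]
          rcases Nat.lt_or_ge k (Multiset.card s + 1) with hlt | hge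
          · have hk1 : k ≤ Multiset.card s := by omega
            rcases Nat.lt_or_ge (k + 1) (Multiset.card s + 1) with hlt2 | hge2
            · have i1 := ih h0s (k+1) (by omega)
              have i2 := ih h0s k hk1
              have hsub : Multiset.card s + 1 - (k + 1) = (Multiset.card s - (k+1)) + 1 := by
                omega
              rw [hsub, esymm_cons]
              have hsub2 : Multiset.card s - (k + 1) + 1 = Multiset.card s - k := by omega
              rw [hsub2]
              calc ((s.map fun x => x⁻¹).esymm (k + 1) + a⁻¹ * (s.map fun x => x⁻¹).esymm k) *
                    (a * s.prod)
                  = ((s.map fun x => x⁻¹).esymm (k + 1) * s.prod) * a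
                    + (a⁻¹ * a) * ((s.map fun x => x⁻¹).esymm k * s.prod) := by ring
                _ = s.esymm (Multiset.card s - (k+1)) * a + s.esymm (Multiset.card s - k) := by
                    rw [i1, i2, inv_mul_cancel₀ ha, one_mul]
                _ = s.esymm (Multiset.card s - k) + a * s.esymm (Multiset.card s - (k + 1)) := by
                    ring
            · have hks : k = Multiset.card s := by omega
              have i2 := ih h0s k (le_of_eq hks)
              have hz : (s.map fun x => x⁻¹).esymm (k+1) = 0 := by
                apply esymm_of_card_lt
                rw [Multiset.card_map]
                omega
              rw [hz, zero_add, show Multiset.card s + 1 - (k + 1) = 0 from by omega,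
                esymm_zero']
              calc a⁻¹ * (s.map fun x => x⁻¹).esymm k * (a * s.prod)
                  = (a⁻¹ * a) * ((s.map fun x => x⁻¹).esymm k * s.prod) := by ring
                _ = 1 := by
                    rw [inv_mul_cancel₀ ha, one_mul, i2, hks, Nat.sub_self, esymm_zero']
          · omega

/-- Pure algebra transfer step. -/
lemma transfer (nn mk mm mp ak am ap bk bm bp ck cm cp dk dm dp : ℝ)
    (hmk : 0 < mk) (hmm : 0 < mm) (hmp : 0 < mp)
    (hbk : nn * bk = mk * ak) (hbm : nn * bm = mm * am) (hbp : nn * bp = mp * ap)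
    (hdk : mk * ck = nn * dk) (hdm : mm * cm = nn * dm) (hdp : mp * cp = nn * dp)
    (hIH : dk ^ 2 * (bm * bp) ≤ dm * dp * bk ^ 2) :
    ck ^ 2 * (am * ap) ≤ cm * cp * ak ^ 2 := by
  refine le_of_mul_le_mul_left ?_ (show 0 < mm * mp * mk ^ 2 by positivity)
  have H := mul_le_mul_of_nonneg_left hIH (show (0:ℝ) ≤ nn ^ 4 by positivity)
  calc (mm * mp * mk ^ 2) * (ck ^ 2 * (am * ap))
      = (mk * ck) ^ 2 * ((mm * am) * (mp * ap)) := by ring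
    _ = (nn * dk) ^ 2 * ((nn * bm) * (nn * bp)) := by rw [hdk, ← hbm, ← hbp]
    _ = nn ^ 4 * (dk ^ 2 * (bm * bp)) := by ring
    _ ≤ nn ^ 4 * (dm * dp * bk ^ 2) := H
    _ = (nn * dm) * (nn * dp) * ((nn * bk) ^ 2) := by ring
    _ = (mm * cm) * (mp * cp) * ((mk * ak) ^ 2) := by rw [← hdm, ← hdp, hbk]
    _ = (mm * mp * mk ^ 2) * (cm * cp * ak ^ 2) := by ring

/-- Newton's inequality (normalized, multiplied-out form). -/
theorem newtonN : ∀ (N : ℕ) (s : Multiset ℝ), Multiset.card s = N → ∀ k, 1 ≤ k → k + 1 ≤ N →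
    (N.choose k : ℝ) ^ 2 * (s.esymm (k - 1) * s.esymm (k + 1)) ≤
      (N.choose (k - 1) : ℝ) * (N.choose (k + 1) : ℝ) * s.esymm k ^ 2 := by
  intro N
  induction N using Nat.strong_induction_on with
  | _ N IH =>
    intro s hcard k hk hkN
    rcases eq_or_ne k 1 with rfl | hk1
    · have := newton_one s (by omega)
      rw [hcard] at this
      exact this
    · have hk2 : 2 ≤ k := by omega
      rcases Nat.lt_or_ge (k + 1) N with hlt | hge
      · -- derivative case
        obtain ⟨t, htc, hrel⟩ := exists_deriv_multiset s (by omega)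
        rw [hcard] at htc hrel
        have IHt := IH (N - 1) (by omega) t htc k hk (by omega)
        have hN1 : 1 ≤ N := by omega
        have hbm := hrel (k - 1) (by omega)
        have hbk := hrel k (by omega)
        have hbp := hrel (k + 1) (by omega)
        have hchoose : ∀ j : ℕ, ((N - j : ℕ) : ℝ) * (N.choose j : ℝ)
            = (N : ℝ) * ((N - 1).choose j : ℝ) := by
          intro j
          exact_mod_cast congrArg (Nat.cast (R := ℝ)) (choose_sub_mul N j hN1)
        refine transfer (N : ℝ) ((N - k : ℕ) : ℝ) ((N - (k - 1) : ℕ) : ℝ) ((N - (k + 1) : ℕ) : ℝ)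
          (s.esymm k) (s.esymm (k - 1)) (s.esymm (k + 1))
          (t.esymm k) (t.esymm (k - 1)) (t.esymm (k + 1))
          ((N.choose k : ℕ) : ℝ) ((N.choose (k - 1) : ℕ) : ℝ) ((N.choose (k + 1) : ℕ) : ℝ)
          (((N - 1).choose k : ℕ) : ℝ) (((N - 1).choose (k - 1) : ℕ) : ℝ)
          (((N - 1).choose (k + 1) : ℕ) : ℝ)
          ?_ ?_ ?_ hbk hbm hbp (hchoose k) (hchoose (k - 1)) (hchoose (k + 1)) IHt
        · exact_mod_cast Nat.sub_pos_of_lt (by omega)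
        · exact_mod_cast Nat.sub_pos_of_lt (by omega)
        · exact_mod_cast Nat.sub_pos_of_lt (by omega)
      · -- base case : k + 1 = N
        have hkN' : k + 1 = N := by omega
        by_cases h0 : (0 : ℝ) ∈ s
        · have hz : s.esymm (k + 1) = 0 := by
            rw [show k + 1 = Multiset.card s from by omega, esymm_card]
            exact Multiset.prod_eq_zero h0
          rw [hz, mul_zero, mul_zero]
          positivity
        · set t : Multiset ℝ := s.map (fun x => x⁻¹) with ht
          have hct : Multiset.card t = N := by rw [ht, Multiset.card_map, hcard]
          have hB := newton_one t (by omega)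
          rw [hct] at hB
          have hI0 := esymm_inv s h0 0 (by omega)
          have hI1 := esymm_inv s h0 1 (by omega)
          have hI2 := esymm_inv s h0 2 (by omega)
          rw [hcard] at hI0 hI1 hI2
          have hc1 : N.choose k = N.choose 1 := by
            rw [show k = N - 1 from by omega]
            exact Nat.choose_symm (by omega)
          have hc2 : N.choose (k - 1) = N.choose 2 := by
            rw [show k - 1 = N - 2 from by omega]
            exact Nat.choose_symm (by omega)
          have hc3 : N.choose (k + 1) = N.choose 0 := by
            rw [hkN', Nat.choose_self, Nat.choose_zero_right]
          rw [hc1, hc2, hc3]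
          have he1 : s.esymm (k + 1) = t.esymm 0 * s.prod := by
            rw [show k + 1 = N - 0 from by omega]
            exact hI0.symm
          have he2 : s.esymm (k - 1) = t.esymm 2 * s.prod := by
            rw [show k - 1 = N - 2 from by omega]
            exact hI2.symm
          have he3 : s.esymm k = t.esymm 1 * s.prod := by
            rw [show k = N - 1 from by omega]
            exact hI1.symm
          rw [he1, he2, he3]
          have hB' := mul_le_mul_of_nonneg_right hB (sq_nonneg s.prod)
          calc (N.choose 1 : ℝ) ^ 2 * (t.esymm 2 * s.prod * (t.esymm 0 * s.prod))
              = ((N.choose 1 : ℝ) ^ 2 * (t.esymm 0 * t.esymm 2)) * s.prod ^ 2 := by ring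
            _ ≤ ((N.choose 0 : ℝ) * (N.choose 2 : ℝ) * t.esymm 1 ^ 2) * s.prod ^ 2 := hB'
            _ = (N.choose 2 : ℝ) * (N.choose 0 : ℝ) * (t.esymm 1 * s.prod) ^ 2 := by ring

/-- Newton's inequality. -/
theorem newton (s : Multiset ℝ) (k : ℕ) (hk : 1 ≤ k) (hkn : k + 1 ≤ Multiset.card s) :
    ((Multiset.card s).choose k : ℝ) ^ 2 * (s.esymm (k - 1) * s.esymm (k + 1)) ≤
      ((Multiset.card s).choose (k - 1) : ℝ) * ((Multiset.card s).choose (k + 1) : ℝ) *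
        s.esymm k ^ 2 :=
  newtonN (Multiset.card s) s rfl k hk hkn

end MaclaurinAux

namespace MaclaurinAux

lemma symmS_eq (n k : ℕ) (lam : Fin n → ℝ) :
    symmS n k lam = (Multiset.map lam (Finset.univ.val : Multiset (Fin n))).esymm k := by
  rw [symmS, Finset.esymm_map_val]

lemma card_univ_map (n : ℕ) (lam : Fin n → ℝ) :
    Multiset.card (Multiset.map lam (Finset.univ.val : Multiset (Fin n))) = n := by
  simp

lemma symmS_zero (n : ℕ) (lam : Fin n → ℝ) : symmS n 0 lam = 1 := by
  simp [symmS]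

end MaclaurinAux

/-- Maclaurin's inequality: if `λ ∈ Γᵐ` then for all `1 ≤ j ≤ i ≤ m`,
`(Sⱼ(λ)/C(n,j))^(1/j) ≥ (Sᵢ(λ)/C(n,i))^(1/i)`. -/
theorem maclaurin_inequality (n m : ℕ) (hmn : m ≤ n)
    (lam : Fin n → ℝ) (hlam : lam ∈ GammaCone n m)
    (j i : ℕ) (hj : 1 ≤ j) (hji : j ≤ i) (him : i ≤ m) :
    (symmS n i lam / (n.choose i : ℝ)) ^ ((1 : ℝ) / i) ≤
      (symmS n j lam / (n.choose j : ℝ)) ^ ((1 : ℝ) / j) := by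
  classical
  set p : ℕ → ℝ := fun k => symmS n k lam / (n.choose k : ℝ) with hp
  have hp0 : p 0 = 1 := by simp [hp, MaclaurinAux.symmS_zero]
  have hppos : ∀ k, 1 ≤ k → k ≤ m → 0 < p k := by
    intro k h1 h2
    exact div_pos (hlam k h1 h2)
      (by exact_mod_cast Nat.choose_pos (le_trans h2 hmn))
  have hnewton : ∀ k, 1 ≤ k → k + 1 ≤ m → p (k - 1) * p (k + 1) ≤ p k ^ 2 := by
    intro k h1 h2
    have hN := MaclaurinAux.newton (Multiset.map lam (Finset.univ.val : Multiset (Fin n))) k h1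
      (by rw [MaclaurinAux.card_univ_map]; omega)
    rw [MaclaurinAux.card_univ_map, ← MaclaurinAux.symmS_eq n (k - 1) lam,
      ← MaclaurinAux.symmS_eq n (k + 1) lam, ← MaclaurinAux.symmS_eq n k lam] at hN
    have hCk : (0 : ℝ) < (n.choose k : ℝ) := by
      exact_mod_cast Nat.choose_pos (by omega)
    have hCm : (0 : ℝ) < (n.choose (k - 1) : ℝ) := by
      exact_mod_cast Nat.choose_pos (by omega)
    have hCp : (0 : ℝ) < (n.choose (k + 1) : ℝ) := by
      exact_mod_cast Nat.choose_pos (by omega)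
    simp only [hp]
    rw [div_mul_div_comm, div_pow, div_le_div_iff₀ (by positivity) (by positivity)]
    nlinarith [hN]
  have chain : ∀ k, 1 ≤ k → k + 1 ≤ m → p (k + 1) ^ k ≤ p k ^ (k + 1) := by
    intro k
    induction k with
    | zero => intro h1 _; exact (Nat.not_succ_le_zero 0 h1).elim
    | succ k ihk =>
        intro _ hk2m
        rcases Nat.eq_zero_or_pos k with rfl | hkpos
        · have h := hnewton 1 le_rfl (by omega)
          norm_num [hp0] at h
          simpa using h
        · have ih := ihk hkpos (by omega)
          have hnew := hnewton (k + 1) (by omega) (by omega)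
          simp only [Nat.add_sub_cancel] at hnew
          have pk := hppos k hkpos (by omega)
          have pk1 := hppos (k + 1) (by omega) (by omega)
          have pk2 := hppos (k + 2) (by omega) (by omega)
          refine le_of_mul_le_mul_right ?_ (pow_pos pk1 k)
          calc p (k + 2) ^ (k + 1) * p (k + 1) ^ k
              ≤ p (k + 2) ^ (k + 1) * p k ^ (k + 1) := by
                exact mul_le_mul_of_nonneg_left ih (by positivity)
            _ = (p (k + 2) * p k) ^ (k + 1) := by rw [mul_pow]
            _ ≤ (p (k + 1) ^ 2) ^ (k + 1) := by
                refine pow_le_pow_left₀ (by positivity) ?_ _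
                calc p (k + 2) * p k = p k * p (k + 2) := by ring
                  _ ≤ p (k + 1) ^ 2 := hnew
            _ = p (k + 1) ^ (k + 2) * p (k + 1) ^ k := by
                rw [← pow_mul, ← pow_add]
                congr 1
                omega
  have consec : ∀ k, 1 ≤ k → k + 1 ≤ m →
      p (k + 1) ^ ((1 : ℝ) / (k + 1)) ≤ p k ^ ((1 : ℝ) / k) := by
    intro k h1 h2
    have ha := hppos (k + 1) (by omega) (by omega)
    have hb := hppos k h1 (by omega)
    have hc := chain k h1 h2
    have h3 : ((p (k + 1)) ^ (k : ℕ)) ^ ((1 : ℝ) / ((k : ℝ) * ((k : ℝ) + 1)))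
        ≤ ((p k) ^ (k + 1 : ℕ)) ^ ((1 : ℝ) / ((k : ℝ) * ((k : ℝ) + 1))) := by
      apply Real.rpow_le_rpow (by positivity) hc (by positivity)
    rw [← Real.rpow_natCast (p (k + 1)) k, ← Real.rpow_natCast (p k) (k + 1),
      ← Real.rpow_mul ha.le, ← Real.rpow_mul hb.le] at h3
    have hk0 : (k : ℝ) ≠ 0 := by
      exact_mod_cast Nat.pos_iff_ne_zero.mp h1
    have e1 : (k : ℝ) * ((1 : ℝ) / ((k : ℝ) * ((k : ℝ) + 1))) = 1 / ((k : ℝ) + 1) := by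
      field_simp
    have e2 : ((k + 1 : ℕ) : ℝ) * ((1 : ℝ) / ((k : ℝ) * ((k : ℝ) + 1))) = 1 / (k : ℝ) := by
      push_cast
      field_simp
    rw [e1, e2] at h3
    exact h3
  have main : ∀ i', j ≤ i' → i' ≤ m → p i' ^ ((1 : ℝ) / i') ≤ p j ^ ((1 : ℝ) / j) := by
    intro i' hi'
    induction i', hi' using Nat.le_induction with
    | base => intro _; exact le_rfl
    | succ i' hji' ih =>
        intro him'
        have h1 := consec i' (le_trans hj hji') him'
        push_cast
        exact le_trans h1 (ih (by omega))
  exact main i hji him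
end

section
/- Kolodziej-type iteration lemma: let φ : (0, s₀) → ℝ be a monotone increasing function with lim_{s→0⁺} φ(s) = 0, φ(s) > 0 for s ∈ (0, s₀), and suppose there exist constants C₀ > 0 and δ₀ > 0 such that t·φ(s−t) ≤ C₀·φ(s)^(1+δ₀) for all 0 < t < s < s₀. Then φ(s₀) ≥ (s₀(1 − 2^(−δ₀))/(2C₀))^(1/δ₀). -/
noncomputable def kolSeq (C₀ δ₀ : ℝ) (φ : ℝ → ℝ) (s₁ : ℝ) : ℕ → ℝ
  | 0 => s₁
  | k + 1 => kolSeq C₀ δ₀ φ s₁ k - 2 * C₀ * φ (kolSeq C₀ δ₀ φ s₁ k) ^ δ₀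

/-- Kolodziej-type iteration lemma: if `φ` is monotone increasing on `(0, s₀)`,
tends to `0` as `s → 0⁺`, is positive on `(0, s₀)`, and satisfies
`t·φ(s−t) ≤ C₀·φ(s)^(1+δ₀)` for all `0 < t < s < s₀`, then
`φ(s₀) ≥ (s₀(1 − 2^(−δ₀))/(2C₀))^(1/δ₀)`. -/
theorem kolodziej_iteration (s₀ C₀ δ₀ : ℝ) (hs₀ : 0 < s₀) (hC₀ : 0 < C₀) (hδ₀ : 0 < δ₀)
    (φ : ℝ → ℝ)
    (hmono : MonotoneOn φ (Set.Ioc 0 s₀))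
    (hlim : Filter.Tendsto φ (nhdsWithin 0 (Set.Ioi 0)) (nhds 0))
    (hpos : ∀ s, 0 < s → s < s₀ → 0 < φ s)
    (hiter : ∀ t s, 0 < t → t < s → s < s₀ → t * φ (s - t) ≤ C₀ * φ s ^ (1 + δ₀)) :
    (s₀ * (1 - (2 : ℝ) ^ (-δ₀)) / (2 * C₀)) ^ ((1 : ℝ) / δ₀) ≤ φ s₀ := by
  set r : ℝ := (2 : ℝ) ^ (-δ₀) with hr
  have hr0 : 0 < r := Real.rpow_pos_of_pos (by norm_num) _
  have hr1 : r < 1 := Real.rpow_lt_one_of_one_lt_of_neg (by norm_num) (by linarith)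
  have ha : 0 < φ s₀ := by
    have h1 := hpos (s₀ / 2) (by linarith) (by linarith)
    have hle : φ (s₀ / 2) ≤ φ s₀ :=
      hmono ⟨by linarith, by linarith⟩ ⟨hs₀, le_refl _⟩ (by linarith)
    linarith
  by_contra hcon
  push_neg at hcon
  set a := φ s₀ with haa
  have hbase : 0 < s₀ * (1 - r) / (2 * C₀) := div_pos (mul_pos hs₀ (by linarith)) (by linarith)
  -- a ^ δ₀ < base
  have hkey : a ^ δ₀ < s₀ * (1 - r) / (2 * C₀) := by
    have h1 : a ^ δ₀ < ((s₀ * (1 - r) / (2 * C₀)) ^ ((1:ℝ)/δ₀)) ^ δ₀ :=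
      Real.rpow_lt_rpow ha.le hcon hδ₀
    rwa [← Real.rpow_mul hbase.le, one_div,
      inv_mul_cancel₀ hδ₀.ne', Real.rpow_one] at h1
  set T : ℝ := 2 * C₀ * a ^ δ₀ / (1 - r) with hT
  have haδ : 0 < a ^ δ₀ := Real.rpow_pos_of_pos ha _
  have hT0 : 0 < T := div_pos (by positivity) (by linarith)
  have hTs : T < s₀ := by
    rw [hT, div_lt_iff₀ (by linarith : (0:ℝ) < 1 - r)]
    rw [lt_div_iff₀ (by linarith : (0:ℝ) < 2 * C₀)] at hkey
    nlinarith
  set s₁ : ℝ := (T + s₀) / 2 with hs₁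
  have hs₁T : T < s₁ := by simp only [hs₁]; linarith
  have hs₁s₀ : s₁ < s₀ := by simp only [hs₁]; linarith
  have hs₁0 : 0 < s₁ := by linarith
  have hφ1 : 0 < φ s₁ := hpos _ hs₁0 hs₁s₀
  set t₁ : ℝ := 2 * C₀ * φ s₁ ^ δ₀ with ht₁
  have ht₁0 : 0 < t₁ := by
    have := Real.rpow_pos_of_pos hφ1 δ₀; positivity
  have ht₁T : t₁ / (1 - r) ≤ T := by
    have hφle : φ s₁ ≤ a := hmono (Set.mem_Ioc.2 ⟨hs₁0, hs₁s₀.le⟩)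
      (Set.mem_Ioc.2 ⟨hs₀, le_refl _⟩) hs₁s₀.le
    have := Real.rpow_le_rpow hφ1.le hφle hδ₀.le
    rw [hT]
    apply div_le_div_of_nonneg_right _ (by linarith)
    nlinarith
  set s : ℕ → ℝ := kolSeq C₀ δ₀ φ s₁ with hsdef
  -- key conversion lemma
  have hpow : ∀ k : ℕ, ((1/2 : ℝ) ^ k) ^ δ₀ = r ^ k := by
    intro k
    have h2 : ((1/2 : ℝ) ^ k) = (2:ℝ) ^ (-(k:ℝ)) := by
      rw [Real.rpow_neg (by norm_num), Real.rpow_natCast, one_div, inv_pow]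
    rw [h2, hr, ← Real.rpow_natCast ((2:ℝ)^(-δ₀)) k, ← Real.rpow_mul (by norm_num),
      ← Real.rpow_mul (by norm_num)]
    ring_nf
  have hfrac : ∀ m : ℕ, (1 - r ^ m) * t₁ / (1 - r) < t₁ / (1 - r) := by
    intro m
    have hm : 0 < r ^ m := pow_pos hr0 m
    rw [div_lt_div_iff₀ (by linarith) (by linarith)]
    nlinarith [mul_pos (mul_pos hm ht₁0) (show (0:ℝ) < 1 - r by linarith)]
  -- main induction
  have main : ∀ k : ℕ, φ (s k) ≤ (1/2 : ℝ) ^ k * φ s₁ ∧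
      s₁ - s k ≤ (1 - r ^ k) * t₁ / (1 - r) ∧ s k ≤ s₁ := by
    intro k
    induction k with
    | zero => simp [hsdef, kolSeq, hφ1.le]
    | succ k ih =>
      obtain ⟨ihφ, ihsum, ihle⟩ := ih
      -- properties of s k
      have hsk_lb : s₁ - T < s k := by
        have h1 := (hfrac k).trans_le ht₁T
        linarith
      have hsk0 : 0 < s k := by linarith
      have hsks₀ : s k < s₀ := lt_of_le_of_lt ihle hs₁s₀
      have hφk : 0 < φ (s k) := hpos _ hsk0 hsks₀
      set t : ℝ := 2 * C₀ * φ (s k) ^ δ₀ with htd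
      have ht0 : 0 < t := by
        have := Real.rpow_pos_of_pos hφk δ₀; positivity
      have hsucc : s (k+1) = s k - t := rfl
      -- bound t ≤ r^k * t₁
      have htb : t ≤ r ^ k * t₁ := by
        have h1 : φ (s k) ^ δ₀ ≤ ((1/2:ℝ)^k * φ s₁) ^ δ₀ :=
          Real.rpow_le_rpow hφk.le ihφ hδ₀.le
        rw [Real.mul_rpow (by positivity) hφ1.le, hpow] at h1
        rw [htd, ht₁]
        nlinarith [pow_pos hr0 k]
      -- new sum bound
      have hsum' : s₁ - s (k+1) ≤ (1 - r ^ (k+1)) * t₁ / (1 - r) := by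
        rw [hsucc]
        have h1r : (1 - r) ≠ 0 := by linarith
        have heq : (1 - r ^ k) * t₁ / (1 - r) + r ^ k * t₁
            = (1 - r ^ (k+1)) * t₁ / (1 - r) := by
          rw [eq_div_iff h1r, add_mul, div_mul_cancel₀ _ h1r, pow_succ]
          ring
        linarith
      have hsk1_lb : 0 < s (k+1) := by
        have h1 := (hfrac (k+1)).trans_le ht₁T
        linarith
      have hts : t < s k := by rw [hsucc] at hsk1_lb; linarith
      -- apply iteration
      have happ := hiter t (s k) ht0 hts hsks₀
      have hrw : C₀ * φ (s k) ^ (1 + δ₀) = t / 2 * φ (s k) := by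
        rw [Real.rpow_add hφk, Real.rpow_one, htd]; ring
      rw [hrw, ← hsucc] at happ
      have hφ' : φ (s (k+1)) ≤ φ (s k) / 2 := by
        have h2 : t * φ (s (k+1)) ≤ t * (φ (s k) / 2) := by linarith
        exact (mul_le_mul_iff_right₀ ht0).1 h2
      refine ⟨?_, hsum', by rw [hsucc]; linarith⟩
      calc φ (s (k+1)) ≤ φ (s k) / 2 := hφ'
        _ ≤ (1/2:ℝ)^k * φ s₁ / 2 := by linarith
        _ = (1/2:ℝ)^(k+1) * φ s₁ := by ring
  -- contradiction
  set σ : ℝ := s₁ - T with hσ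
  have hσ0 : 0 < σ := by simp only [hσ]; linarith
  have hσs₀ : σ < s₀ := by simp only [hσ]; linarith
  have hφσ : 0 < φ σ := hpos _ hσ0 hσs₀
  obtain ⟨k, hk⟩ := exists_pow_lt_of_lt_one (div_pos hφσ hφ1) (by norm_num : (1/2:ℝ) < 1)
  obtain ⟨hφk, hsum, hle⟩ := main k
  have hsk_lb : σ < s k := by
    have h1 := (hfrac k).trans_le ht₁T
    simp only [hσ]; linarith
  have hmle : φ σ ≤ φ (s k) := hmono (Set.mem_Ioc.2 ⟨hσ0, by linarith⟩)
    (Set.mem_Ioc.2 ⟨by linarith, by linarith⟩) hsk_lb.le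
  have : (1/2:ℝ)^k * φ s₁ < φ σ := by
    rw [lt_div_iff₀ hφ1] at hk
    linarith
  linarith
end
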